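/- Let p be an odd rational prime with p ≡ 2 (mod 3), so that p is a prime element of ℤ[ω], and let β ∈ ℤ[ω] with p ∤ β. Then β^{(p²−1)/2} ≡ (N(β)/p) (mod pℤ[ω]), where N(β) ∈ ℤ is the norm of β and (N(β)/p) ∈ {1, −1} is the Legendre symbol of N(β) modulo p. In other words, the quadratic residue symbol satisfies [β/p] = (N(β)/p). -/

import Mathlib

set_option maxHeartbeats 800000

noncomputable section

/-- `ω = (−1+√−3)/2 ∈ ℂ`. -/
def ω : ℂ := (-1 + Complex.I * Real.sqrt 3) / 2

/-- The ring `ℤ[ω]` of Eisenstein integers, as a subalgebra of `ℂ`. -/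
def Zω : Subalgebra ℤ ℂ := Algebra.adjoin ℤ {ω}

/-- `ω` as an element of `ℤ[ω]`. -/
def ωZ : Zω := ⟨ω, Algebra.subset_adjoin (Set.mem_singleton ω)⟩

lemma hs3 : (Real.sqrt 3 : ℂ)^2 = 3 := by
  norm_cast
  rw [Real.sq_sqrt] <;> norm_num

lemma hI2 : Complex.I ^ 2 = -1 := Complex.I_sq

lemma hω2 : ω^2 = -1 - ω := by
  unfold ω
  linear_combination ((Real.sqrt 3:ℂ)^2/4) * hI2 - (1/4) * hs3

lemma hω3 : ω^3 = 1 := by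
  linear_combination (ω - 1) * hω2

lemma hconjω : (starRingEnd ℂ) ω = -1 - ω := by
  unfold ω
  simp [map_div₀, Complex.conj_I, Complex.conj_ofReal, map_ofNat]
  ring

lemma coords' : ∀ x ∈ Algebra.adjoin ℤ ({ω} : Set ℂ), ∃ a b : ℤ, x = a + b * ω := by
  intro x hx
  induction hx using Algebra.adjoin_induction with
  | mem x hx => exact ⟨0, 1, by simp at hx; simp [hx]⟩
  | algebraMap r => exact ⟨r, 0, by simp⟩
  | add x y hx hy ihx ihy =>
      obtain ⟨a, b, h1⟩ := ihx; obtain ⟨c, d, h2⟩ := ihy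
      exact ⟨a + c, b + d, by rw [h1, h2]; push_cast; ring⟩
  | mul x y hx hy ihx ihy =>
      obtain ⟨a, b, h1⟩ := ihx; obtain ⟨c, d, h2⟩ := ihy
      refine ⟨a*c - b*d, a*d + b*c - b*d, ?_⟩
      rw [h1, h2]; push_cast
      linear_combination (b : ℂ) * d * hω2

lemma coords (z : Zω) : ∃ a b : ℤ, (z : ℂ) = a + b * ω := coords' z z.2

lemma int_dvd_of_dvd (p : ℕ) (hp : p ≠ 0) (n : ℤ) (h : (p : Zω) ∣ (n : Zω)) : (p : ℤ) ∣ n := by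
  obtain ⟨z, hz⟩ := h
  obtain ⟨a, b, hab⟩ := coords z
  have hC : (n : ℂ) = p * (a + b * ω) := by
    have := congrArg (Subtype.val) hz
    push_cast at this
    rw [hab] at this
    exact_mod_cast this
  have him := congrArg Complex.im hC
  have hre := congrArg Complex.re hC
  simp [ω, Complex.add_im, Complex.mul_im, Complex.add_re, Complex.mul_re] at him hre
  obtain hb | hb := him
  · exact absurd hb hp
  · rw [hb] at hre
    norm_num at hre
    exact ⟨a, by exact_mod_cast hre⟩

/-- `√−3 = 1 + 2ω` as an element of `ℤ[ω]`. -/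
def sqrtm3 : Zω := 1 + 2 * ωZ

/-- Let `p` be an odd rational prime with `p ≡ 2 (mod 3)` (so `p` is a prime element of
`ℤ[ω]`), and let `β ∈ ℤ[ω]` with `p ∤ β`.  Then
`β^{(p²−1)/2} ≡ (N(β)/p) (mod pℤ[ω])`, where `N(β) = β·conj β ∈ ℤ` and `(N(β)/p)` is
the Legendre symbol; i.e. the quadratic residue symbol satisfies `[β/p] = (N(β)/p)`. -/
theorem stmt13 (p : ℕ) [Fact (Nat.Prime p)] (hodd : p ≠ 2) (hp3 : p % 3 = 2)
    (β : Zω) (hβ : ¬ ((p : Zω) ∣ β))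
    (Nβ : ℤ) (hNβ : ((Nβ : ℂ)) = (β : ℂ) * (starRingEnd ℂ) (β : ℂ)) :
    (p : Zω) ∣ β ^ ((p ^ 2 - 1) / 2) - ((legendreSym p Nβ : ℤ) : Zω) := by
  have hp : p.Prime := Fact.out
  have hp2 := hp.two_le
  have hωZ3 : (ωZ ^ 3 : Zω) = 1 := Subtype.ext (by push_cast; exact hω3)
  obtain ⟨a, b, hab⟩ := coords β
  have hβZ : β = (a : Zω) + (b : Zω) * ωZ := Subtype.ext (by push_cast; exact hab)
  -- norm identity
  have hN : Nβ = a ^ 2 - a * b + b ^ 2 := by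
    have hc : (starRingEnd ℂ) ((a : ℂ) + b * ω) = a + b * (-1 - ω) := by
      rw [map_add, map_mul, hconjω, map_intCast, map_intCast]
    have : (Nβ : ℂ) = ((a ^ 2 - a * b + b ^ 2 : ℤ) : ℂ) := by
      rw [hNβ, hab, hc]
      push_cast
      linear_combination (-(b : ℂ) ^ 2) * hω2
    exact_mod_cast this
  have hmul : β * ((a : Zω) + (b : Zω) * ωZ ^ 2) = ((Nβ : ℤ) : Zω) := by
    apply Subtype.ext
    push_cast [hab, hN]
    simp only [show ((ωZ : Zω) : ℂ) = ω from rfl]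
    linear_combination ((a : ℂ) * b) * hω2 + ((b : ℂ) ^ 2) * hω3
  -- Fermat little theorem transported to Zω
  have hfer : ∀ m : ℤ, (p : Zω) ∣ ((m : ℤ) : Zω) ^ p - ((m : ℤ) : Zω) := by
    intro m
    have h2 : ((m ^ p - m : ℤ) : ZMod p) = 0 := by
      push_cast [ZMod.pow_card]
      ring
    have h1 : (p : ℤ) ∣ m ^ p - m := (ZMod.intCast_zmod_eq_zero_iff_dvd _ p).1 h2
    have h3 := map_dvd (Int.castRingHom Zω) h1
    simp only [map_intCast, eq_intCast] at h3
    push_cast at h3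
    exact h3
  -- ω ^ p = ω ^ 2
  have hωp : ωZ ^ p = ωZ ^ 2 := by
    obtain ⟨k, hk⟩ : ∃ k, p = 3 * k + 2 := ⟨p / 3, by omega⟩
    rw [hk, pow_add, pow_mul, hωZ3, one_pow, one_mul]
  -- Frobenius: β ^ p ≡ a + b ω² (mod p)
  have hfrob : (p : Zω) ∣ β ^ p - ((a : Zω) + (b : Zω) * ωZ ^ 2) := by
    obtain ⟨r, hr⟩ := exists_add_pow_prime_eq hp ((a : ℤ) : Zω) (((b : ℤ) : Zω) * ωZ)
    obtain ⟨u, hu⟩ := hfer a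
    obtain ⟨v, hv⟩ := hfer b
    refine ⟨u + v * ωZ ^ 2 + (a : Zω) * (b : Zω) * ωZ * r, ?_⟩
    rw [hβZ, hr, mul_pow, hωp]
    linear_combination hu + ωZ ^ 2 * hv
  -- β ^ (p+1) ≡ Nβ (mod p)
  have hmul' : (p : Zω) ∣ β ^ (p + 1) - ((Nβ : ℤ) : Zω) := by
    obtain ⟨u, hu⟩ := hfrob
    exact ⟨β * u, by linear_combination β * hu + hmul⟩
  -- exponent arithmetic
  set k := p / 2 with hk
  have hpodd : p % 2 = 1 := Nat.odd_iff.1 (hp.odd_of_ne_two hodd)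
  have he : (p ^ 2 - 1) / 2 = (p + 1) * k := by
    have h2 : p = 2 * k + 1 := by omega
    have h3 : p ^ 2 = 4 * (k * k) + 4 * k + 1 := by rw [h2]; ring
    have h4 : (p + 1) * k = 2 * (k * k) + 2 * k := by rw [h2]; ring
    omega
  have hpow : (p : Zω) ∣ (β ^ (p + 1)) ^ k - ((Nβ : ℤ) : Zω) ^ k :=
    dvd_trans hmul' (sub_dvd_pow_sub_pow _ _ k)
  -- Legendre symbol
  have hleg : (p : ℤ) ∣ Nβ ^ k - legendreSym p Nβ := by
    have h2 : ((Nβ ^ k - legendreSym p Nβ : ℤ) : ZMod p) = 0 := by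
      push_cast
      rw [legendreSym.eq_pow, hk]
      ring
    exact (ZMod.intCast_zmod_eq_zero_iff_dvd _ p).1 h2
  have hlegZ : (p : Zω) ∣ ((Nβ : ℤ) : Zω) ^ k - ((legendreSym p Nβ : ℤ) : Zω) := by
    have h3 := map_dvd (Int.castRingHom Zω) hleg
    simp only [map_intCast, eq_intCast] at h3
    push_cast at h3
    exact h3
  rw [he, pow_mul]
  have hfin := dvd_add hpow hlegZ
  rwa [sub_add_sub_cancel] at hfin
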